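/- arXiv:1309.3217 — 2 statements merged into one kernel-verified Lean document; each statement's English description precedes it below -/
import Mathlib

section
/- Let π be a strictly positive joint probability density on ℝ^m × ℝ^n and let (Ψ1, Ψ2) ~ π and Ψ1' ~ π₁ be drawn independently of (Ψ1, Ψ2). Then the expected value of the ratio of the two acceptance probabilities, E[π(Ψ2 | Ψ1) / π(Ψ2 | Ψ1')], is at least 1; that is, ∫∫∫ [π(y|x) / π(y|x')] · π(x,y) · π₁(x') dx' dy dx ≥ 1, where the integral is taken in the extended nonnegative reals. (This is the paper's Lemma: the iterated MH strategy is on average more likely than the joint MH strategy to accept its proposal, since both start from the numerically identical proposal and r_iter / r_joint = π(Ψ2|Ψ1)/π(Ψ2|Ψ1').) -/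
open MeasureTheory ENNReal

/-- Cauchy–Schwarz for lintegrals: `(∫ f)² ≤ (∫ f²/g) · (∫ g)` when `g` is a.e. in `(0, ∞)`. -/
lemma cs_aux {α : Type*} [MeasurableSpace α] {μ : Measure α} {f g : α → ℝ≥0∞}
    (hf : Measurable f) (hg : Measurable g)
    (hg0 : ∀ᵐ a ∂μ, g a ≠ 0) (hgt : ∀ᵐ a ∂μ, g a ≠ ∞) :
    (∫⁻ a, f a ∂μ) * (∫⁻ a, f a ∂μ) ≤ (∫⁻ a, f a * f a / g a ∂μ) * ∫⁻ a, g a ∂μ := by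
  set F : α → ℝ≥0∞ := fun a => f a / (g a) ^ (1/2 : ℝ) with hF
  set G : α → ℝ≥0∞ := fun a => (g a) ^ (1/2 : ℝ) with hG
  have hGm : Measurable G := ENNReal.continuous_rpow_const.measurable.comp hg
  have hFm : Measurable F := hf.div hGm
  have hconj : (2 : ℝ).HolderConjugate 2 := by
    exact Real.HolderConjugate.two_two
  have holder := ENNReal.lintegral_mul_le_Lp_mul_Lq μ hconj hFm.aemeasurable hGm.aemeasurable
  have hFG : ∀ᵐ a ∂μ, F a * G a = f a := by
    filter_upwards [hg0, hgt] with a h0 ht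
    have h0' : (g a) ^ (1/2 : ℝ) ≠ 0 := by
      simp [ENNReal.rpow_eq_zero_iff, h0, ht]
    have ht' : (g a) ^ (1/2 : ℝ) ≠ ∞ := by
      simp [ENNReal.rpow_eq_top_iff, h0, ht]
    exact ENNReal.div_mul_cancel h0' ht'
  have hF2 : ∀ a, F a ^ (2 : ℝ) = f a * f a / g a := by
    intro a
    have : F a ^ (2 : ℝ) = (f a) ^ (2 : ℝ) / ((g a) ^ (1/2 : ℝ)) ^ (2 : ℝ) :=
      ENNReal.div_rpow_of_nonneg _ _ (by norm_num)
    rw [this, ← ENNReal.rpow_mul]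
    norm_num
    rw [pow_two]
  have hG2 : ∀ a, G a ^ (2 : ℝ) = g a := by
    intro a
    rw [hG, ← ENNReal.rpow_mul]
    norm_num
  have h1 : ∫⁻ a, (F * G) a ∂μ = ∫⁻ a, f a ∂μ := lintegral_congr_ae hFG
  have h2 : ∫⁻ a, F a ^ (2 : ℝ) ∂μ = ∫⁻ a, f a * f a / g a ∂μ :=
    lintegral_congr fun a => hF2 a
  have h3 : ∫⁻ a, G a ^ (2 : ℝ) ∂μ = ∫⁻ a, g a ∂μ := lintegral_congr fun a => hG2 a
  rw [h1, h2, h3] at holder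
  set A := ∫⁻ a, f a * f a / g a ∂μ
  set B := ∫⁻ a, g a ∂μ
  calc (∫⁻ a, f a ∂μ) * (∫⁻ a, f a ∂μ)
      ≤ (A ^ (1/2 : ℝ) * B ^ (1/2 : ℝ)) * (A ^ (1/2 : ℝ) * B ^ (1/2 : ℝ)) :=
        mul_le_mul' holder holder
    _ = (A ^ (1/2 : ℝ) * A ^ (1/2 : ℝ)) * (B ^ (1/2 : ℝ) * B ^ (1/2 : ℝ)) := by ring
    _ = A * B := by
        rw [← ENNReal.rpow_add_of_nonneg (1/2 : ℝ) (1/2 : ℝ) (by norm_num) (by norm_num),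
          ← ENNReal.rpow_add_of_nonneg (1/2 : ℝ) (1/2 : ℝ) (by norm_num) (by norm_num)]
        norm_num

/-- **The paper's Lemma (Section 4.1).** Let `π` be a strictly positive joint probability
density on `ℝ^m × ℝ^n`, with first marginal `π₁ x = ∫⁻ y, π x y` and conditional density
`π(y|x) = π x y / π₁ x`. If `(Ψ1, Ψ2) ~ π` and `Ψ1' ~ π₁` is drawn independently, then
`E[π(Ψ2|Ψ1) / π(Ψ2|Ψ1')] ≥ 1`, i.e.
`∫∫∫ [π(y|x) / π(y|x')] · π(x,y) · π₁(x') dx' dy dx ≥ 1`,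
the integrals being taken in the extended nonnegative reals. -/
theorem expected_acceptance_ratio_ge_one {m n : ℕ}
    (π : (Fin m → ℝ) → (Fin n → ℝ) → ℝ≥0∞)
    (hmeas : Measurable (Function.uncurry π))
    (hpos : ∀ x y, 0 < π x y)
    (hfin : ∀ x y, π x y < ∞)
    (hnorm : ∫⁻ x, ∫⁻ y, π x y = 1) :
    1 ≤ ∫⁻ x, ∫⁻ y, ∫⁻ x',
        ((π x y / ∫⁻ y', π x y') / (π x' y / ∫⁻ y', π x' y'))
          * π x y * (∫⁻ y', π x' y') := by
  -- marginals
  set p1 : (Fin m → ℝ) → ℝ≥0∞ := fun x => ∫⁻ y, π x y with hp1def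
  set p2 : (Fin n → ℝ) → ℝ≥0∞ := fun y => ∫⁻ x, π x y with hp2def
  have hπx : ∀ y, Measurable fun x => π x y := fun y =>
    hmeas.comp (measurable_id.prodMk measurable_const)
  have hπy : ∀ x, Measurable fun y => π x y := fun x =>
    hmeas.comp (measurable_const.prodMk measurable_id)
  have hswapm : Measurable (Function.uncurry fun y x => π x y) :=
    hmeas.comp measurable_swap
  have hp1m : Measurable p1 := Measurable.lintegral_prod_right hmeas
  have hp2m : Measurable p2 := Measurable.lintegral_prod_right hswapm
  -- positivity of marginals
  have hp1pos : ∀ x, p1 x ≠ 0 := by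
    intro x
    have : 0 < ∫⁻ y, π x y := by
      rw [lintegral_pos_iff_support (hπy x)]
      have : Function.support (fun y => π x y) = Set.univ := by
        ext y; simp [(hpos x y).ne']
      rw [this]
      exact isOpen_univ.measure_pos _ ⟨fun _ => 0, trivial⟩
    exact this.ne'
  have hp2pos : ∀ y, p2 y ≠ 0 := by
    intro y
    have : 0 < ∫⁻ x, π x y := by
      rw [lintegral_pos_iff_support (hπx y)]
      have : Function.support (fun x => π x y) = Set.univ := by
        ext x; simp [(hpos x y).ne']
      rw [this]
      exact isOpen_univ.measure_pos _ ⟨fun _ => 0, trivial⟩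
    exact this.ne'
  -- total masses
  have hp1int : ∫⁻ x, p1 x = 1 := hnorm
  have hp2int : ∫⁻ y, p2 y = 1 := by
    rw [hp2def, ← lintegral_lintegral_swap hmeas.aemeasurable]
    exact hnorm
  have hp1fin : ∀ᵐ x : Fin m → ℝ, p1 x ≠ ∞ := by
    filter_upwards [ae_lt_top hp1m (by rw [hp1int]; exact one_ne_top)] with x hx
    exact hx.ne
  have hp2fin : ∀ᵐ y : Fin n → ℝ, p2 y ≠ ∞ := by
    filter_upwards [ae_lt_top hp2m (by rw [hp2int]; exact one_ne_top)] with y hy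
    exact hy.ne
  -- pointwise rewriting of the integrand
  have hpt : ∀ x y x', ((π x y / p1 x) / (π x' y / p1 x')) * π x y * p1 x'
      = (π x y * π x y / p1 x) * (p1 x' * p1 x' / π x' y) := by
    intro x y x'
    rw [div_eq_mul_inv (π x y / p1 x),
      ENNReal.inv_div (Or.inr (hfin x' y).ne) (Or.inr (hpos x' y).ne')]
    simp only [div_eq_mul_inv]
    ring
  -- first Cauchy–Schwarz: inner integral over x'
  have hinner : ∀ y : Fin n → ℝ, (p2 y)⁻¹ ≤ ∫⁻ x', p1 x' * p1 x' / π x' y := by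
    intro y
    have hcs := cs_aux (μ := volume) hp1m (hπx y)
      (Filter.Eventually.of_forall fun x => (hpos x y).ne')
      (Filter.Eventually.of_forall fun x => (hfin x y).ne)
    rw [hp1int, one_mul] at hcs
    -- hcs : 1 ≤ (∫⁻ x', p1 x' * p1 x' / π x' y) * p2 y
    by_cases hfin2 : p2 y = ∞
    · rw [hfin2]; simp
    · calc (p2 y)⁻¹ = 1 * (p2 y)⁻¹ := (one_mul _).symm
        _ ≤ ((∫⁻ x', p1 x' * p1 x' / π x' y) * p2 y) * (p2 y)⁻¹ :=
            mul_le_mul_left hcs _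
        _ = (∫⁻ x', p1 x' * p1 x' / π x' y) * (p2 y * (p2 y)⁻¹) := by ring
        _ = ∫⁻ x', p1 x' * p1 x' / π x' y := by
            rw [ENNReal.mul_inv_cancel (hp2pos y) hfin2, mul_one]
  -- second Cauchy–Schwarz: for each y
  have houter : ∀ y : Fin n → ℝ, p2 y * p2 y ≤ ∫⁻ x, π x y * π x y / p1 x := by
    intro y
    have hcs := cs_aux (μ := volume) (hπx y) hp1m
      (Filter.Eventually.of_forall hp1pos) hp1fin
    rw [hp1int, mul_one] at hcs
    exact hcs
  -- measurability of the middle integrand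
  have hmid : Measurable (Function.uncurry fun x y =>
      (π x y * π x y / p1 x) * (p2 y)⁻¹) := by
    apply Measurable.mul
    · exact ((hmeas.mul hmeas).div (hp1m.comp measurable_fst))
    · exact (hp2m.comp measurable_snd).inv
  calc (1 : ℝ≥0∞) = ∫⁻ y, p2 y := hp2int.symm
    _ = ∫⁻ y, (p2 y * p2 y) * (p2 y)⁻¹ := by
        refine lintegral_congr_ae ?_
        filter_upwards [hp2fin] with y hy
        by_cases h0 : p2 y = 0
        · simp [h0]
        · rw [mul_assoc, ENNReal.mul_inv_cancel h0 hy, mul_one]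
    _ ≤ ∫⁻ y, (∫⁻ x, π x y * π x y / p1 x) * (p2 y)⁻¹ :=
        lintegral_mono fun y => mul_le_mul_left (houter y) _
    _ = ∫⁻ y, ∫⁻ x, (π x y * π x y / p1 x) * (p2 y)⁻¹ := by
        refine lintegral_congr fun y => ?_
        rw [lintegral_mul_const _ (show Measurable fun x => π x y * π x y / p1 x from (hπx y).mul (hπx y) |>.div hp1m)]
    _ = ∫⁻ x, ∫⁻ y, (π x y * π x y / p1 x) * (p2 y)⁻¹ :=
        (lintegral_lintegral_swap hmid.aemeasurable).symm
    _ ≤ ∫⁻ x, ∫⁻ y, (π x y * π x y / p1 x) * ∫⁻ x', p1 x' * p1 x' / π x' y :=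
        lintegral_mono fun x => lintegral_mono fun y =>
          mul_le_mul_right (hinner y) _
    _ = ∫⁻ x, ∫⁻ y, ∫⁻ x', (π x y * π x y / p1 x) * (p1 x' * p1 x' / π x' y) := by
        refine lintegral_congr fun x => lintegral_congr fun y => ?_
        rw [lintegral_const_mul _ (show Measurable fun x' => p1 x' * p1 x' / π x' y from (hp1m.mul hp1m).div (hπx y))]
    _ = ∫⁻ x, ∫⁻ y, ∫⁻ x',
        ((π x y / p1 x) / (π x' y / p1 x')) * π x y * p1 x' := by
        exact lintegral_congr fun x => lintegral_congr fun y =>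
          lintegral_congr fun x' => (hpt x y x').symm
end

section
/- Let S₁, S₂, S₃ be standard Borel spaces and π a probability measure on S₁ × S₂ × S₃ with marginals π₁ on S₁, π₁₂ on S₁ × S₂, and π₁₃ on S₁ × S₃. Let κ : S₁ → measures on S₃ be a Markov kernel disintegrating π₁₃, i.e., π₁₃ = π₁ ⊗ κ. Define ν to be the law of (Ψ₁, Ψ₂, Ψ₃') where (Ψ₁, Ψ₂) ~ π₁₂ and, conditionally on (Ψ₁, Ψ₂) = (ψ₁, ψ₂), Ψ₃' ~ κ(ψ₁). Then: (i) the (S₁, S₃)-marginal of ν equals π₁₃; (ii) the (S₁, S₂)-marginal of ν equals π₁₂; and (iii) under ν, the second and third coordinates are conditionally independent given the first coordinate. (This is the paper's equation (5): after a reduced draw of μ from p(μ|Y,X,θ), the joint law of (X, θ, μ) is the target posterior marginal and X_L is conditionally independent of the new μ given (X, θ).) -/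
open MeasureTheory ProbabilityTheory
open scoped ProbabilityTheory ENNReal

/-- **Equation (5) of the paper.** Let `π` be a probability measure on `S₁ × S₂ × S₃`
(standard Borel spaces), and `κ` a Markov kernel disintegrating the `(S₁,S₃)`-marginal of `π`
over the first coordinate, i.e. `π₁₃ = π₁ ⊗ₘ κ`. Let `ν` be the law of `(Ψ₁, Ψ₂, Ψ₃')` where
`(Ψ₁, Ψ₂) ~ π₁₂` and, conditionally on `(Ψ₁, Ψ₂) = (ψ₁, ψ₂)`, `Ψ₃' ~ κ ψ₁`. Then:
(i) the `(S₁,S₃)`-marginal of `ν` equals `π₁₃`;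
(ii) the `(S₁,S₂)`-marginal of `ν` equals `π₁₂`; and
(iii) under `ν`, the second and third coordinates are conditionally independent given the
first coordinate. -/
theorem reduced_conditional_draw_marginals_and_cond_indep
    {S₁ S₂ S₃ : Type*}
    [MeasurableSpace S₁] [StandardBorelSpace S₁] [Nonempty S₁]
    [MeasurableSpace S₂] [StandardBorelSpace S₂] [Nonempty S₂]
    [MeasurableSpace S₃] [StandardBorelSpace S₃] [Nonempty S₃]
    (π : Measure (S₁ × S₂ × S₃)) [IsProbabilityMeasure π]
    (κ : Kernel S₁ S₃) [IsMarkovKernel κ]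
    (hκ : π.map (fun p => (p.1, p.2.2)) = (π.map (fun p => p.1)) ⊗ₘ κ)
    (ν : Measure (S₁ × S₂ × S₃)) [IsProbabilityMeasure ν]
    (hν : ν = (π.map (fun p => (p.1, p.2.1))).bind
        (fun q => (κ q.1).map (fun z => (q.1, q.2, z)))) :
    ν.map (fun p => (p.1, p.2.2)) = π.map (fun p => (p.1, p.2.2)) ∧
    ν.map (fun p => (p.1, p.2.1)) = π.map (fun p => (p.1, p.2.1)) ∧
    CondIndepFun (MeasurableSpace.comap (fun p : S₁ × S₂ × S₃ => p.1) inferInstance)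
      ((measurable_fst : Measurable (fun p : S₁ × S₂ × S₃ => p.1)).comap_le)
      (fun p : S₁ × S₂ × S₃ => p.2.1) (fun p : S₁ × S₂ × S₃ => p.2.2) ν := by
  classical
  have hmap12 : Measurable (fun p : S₁ × S₂ × S₃ => (p.1, p.2.1)) :=
    measurable_fst.prodMk (measurable_fst.comp measurable_snd)
  have hmap13 : Measurable (fun p : S₁ × S₂ × S₃ => (p.1, p.2.2)) :=
    measurable_fst.prodMk (measurable_snd.comp measurable_snd)
  set π₁ : Measure S₁ := π.map (fun p => p.1) with hπ₁def
  set π₁₂ : Measure (S₁ × S₂) := π.map (fun p => (p.1, p.2.1)) with hπ₁₂def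
  haveI : IsProbabilityMeasure π₁ := Measure.isProbabilityMeasure_map measurable_fst.aemeasurable
  haveI : IsProbabilityMeasure π₁₂ := Measure.isProbabilityMeasure_map hmap12.aemeasurable
  -- the kernel implementing the bind
  set κ' : Kernel (S₁ × S₂) S₃ := κ.comap Prod.fst measurable_fst with hκ'def
  haveI : IsMarkovKernel κ' := by
    constructor; intro q; rw [hκ'def, Kernel.comap_apply]; infer_instance
  have he : Measurable (fun w : (S₁ × S₂) × S₃ => (w.1.1, w.1.2, w.2)) :=
    (measurable_fst.comp measurable_fst).prodMk
      ((measurable_snd.comp measurable_fst).prodMk measurable_snd)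
  set η : Kernel (S₁ × S₂) (S₁ × S₂ × S₃) :=
    Kernel.map (Kernel.id ×ₖ κ') (fun w => (w.1.1, w.1.2, w.2)) with hηdef
  have hη : ∀ q : S₁ × S₂, η q = (κ q.1).map (fun z => (q.1, q.2, z)) := by
    intro q
    rw [hηdef, Kernel.map_apply _ he, Kernel.prod_apply, Kernel.id_apply, hκ'def,
      Kernel.comap_apply, Measure.dirac_prod,
      Measure.map_map he (measurable_prodMk_left)]
    rfl
  -- ν applied to sets
  have hνap : ∀ t : Set (S₁ × S₂ × S₃), MeasurableSet t →
      ν t = ∫⁻ q, κ q.1 ((fun z => (q.1, q.2, z)) ⁻¹' t) ∂π₁₂ := by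
    intro t ht
    have hfun : (fun q : S₁ × S₂ => (κ q.1).map (fun z => (q.1, q.2, z))) = ⇑η :=
      funext fun q => (hη q).symm
    rw [hν, hfun, Measure.bind_apply ht η.measurable.aemeasurable]
    refine lintegral_congr fun q => ?_
    rw [hη q, Measure.map_apply
      (show Measurable fun z : S₃ => (q.1, q.2, z) by fun_prop) ht]
  -- marginal on (S₁, S₂)
  have h12 : ν.map (fun p : S₁ × S₂ × S₃ => (p.1, p.2.1)) = π₁₂ := by
    ext t ht
    rw [Measure.map_apply hmap12 ht, hνap _ (hmap12 ht)]
    have hpt : ∀ q : S₁ × S₂,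
        κ q.1 ((fun z => (q.1, q.2, z)) ⁻¹' ((fun p : S₁ × S₂ × S₃ => (p.1, p.2.1)) ⁻¹' t))
          = t.indicator (fun _ => 1) q := by
      intro q
      by_cases hq : q ∈ t
      · have : ((fun z : S₃ => (q.1, q.2, z)) ⁻¹' ((fun p : S₁ × S₂ × S₃ => (p.1, p.2.1)) ⁻¹' t))
            = Set.univ := by
          ext z; simp [hq]
        simp [this, Set.indicator_of_mem hq]
      · have : ((fun z : S₃ => (q.1, q.2, z)) ⁻¹' ((fun p : S₁ × S₂ × S₃ => (p.1, p.2.1)) ⁻¹' t))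
            = ∅ := by
          ext z; simp [hq]
        simp [this, Set.indicator_of_notMem hq]
    rw [lintegral_congr hpt, lintegral_indicator ht]
    simp
  -- first marginal of ν
  have e1 : π₁₂.map Prod.fst = π₁ := by
    rw [hπ₁₂def, Measure.map_map measurable_fst hmap12, hπ₁def]
    exact Measure.map_congr (Filter.EventuallyEq.of_eq rfl)
  have hfst : ν.map (fun p : S₁ × S₂ × S₃ => p.1) = π₁ := by
    have e2 : ν.map (fun p : S₁ × S₂ × S₃ => p.1)
        = (ν.map (fun p : S₁ × S₂ × S₃ => (p.1, p.2.1))).map Prod.fst := by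
      rw [Measure.map_map measurable_fst hmap12]
      exact Measure.map_congr (Filter.EventuallyEq.of_eq rfl)
    rw [e2, h12, e1]
  -- marginal on (S₁, S₃)
  have h13 : ν.map (fun p : S₁ × S₂ × S₃ => (p.1, p.2.2)) = π₁ ⊗ₘ κ := by
    ext t ht
    rw [Measure.map_apply hmap13 ht, hνap _ (hmap13 ht), Measure.compProd_apply ht]
    have hpt : ∀ q : S₁ × S₂,
        κ q.1 ((fun z => (q.1, q.2, z)) ⁻¹' ((fun p : S₁ × S₂ × S₃ => (p.1, p.2.2)) ⁻¹' t))
          = (fun x => κ x (Prod.mk x ⁻¹' t)) q.1 := by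
      intro q; rfl
    rw [lintegral_congr hpt, ← e1,
      lintegral_map (Kernel.measurable_kernel_prodMk_left ht) measurable_fst]
  have h13' : ν.map (fun p : S₁ × S₂ × S₃ => (p.1, p.2.2))
      = π.map (fun p => (p.1, p.2.2)) := by rw [h13, hκ]
  refine ⟨h13', h12, ?_⟩
  -- conditional independence
  have hm' := (measurable_fst : Measurable (fun p : S₁ × S₂ × S₃ => p.1)).comap_le
  -- the disintegration kernel of π₁₂
  set ρ : Kernel S₁ S₂ := π₁₂.condKernel with hρdef
  have hfst12 : π₁₂.fst = π₁ := e1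
  have hdis : π₁ ⊗ₘ ρ = π₁₂ := by
    rw [hρdef, ← hfst12]; exact π₁₂.disintegrate π₁₂.condKernel
  -- key lemma: identify conditional expectations given m'
  have key : ∀ (C : Set (S₁ × S₂ × S₃)), MeasurableSet C → ∀ (w : S₁ → ℝ≥0∞),
      Measurable w → (∀ x, w x ≤ 1) →
      (∀ u : Set S₁, MeasurableSet u →
        ν ((fun p : S₁ × S₂ × S₃ => p.1) ⁻¹' u ∩ C) = ∫⁻ x in u, w x ∂π₁) →
      (fun p : S₁ × S₂ × S₃ => (w p.1).toReal) =ᵐ[ν] ν⟦C | MeasurableSpace.comap (fun p : S₁ × S₂ × S₃ => p.1) inferInstance⟧ := by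
    intro C hC w hw hw1 hint
    have hwm : Measurable (fun p : S₁ × S₂ × S₃ => (w p.1).toReal) :=
      (hw.comp measurable_fst).ennreal_toReal
    have hbound : ∀ p : S₁ × S₂ × S₃, ‖(w p.1).toReal‖ ≤ 1 := by
      intro p
      rw [Real.norm_eq_abs, abs_of_nonneg ENNReal.toReal_nonneg]
      simpa using ENNReal.toReal_mono (by simp) (hw1 p.1)
    have hwint : Integrable (fun p : S₁ × S₂ × S₃ => (w p.1).toReal) ν :=
      (integrable_const (1 : ℝ)).mono' hwm.aestronglyMeasurable (ae_of_all _ hbound)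
    refine ae_eq_condExp_of_forall_setIntegral_eq hm'
      ((integrable_const (1 : ℝ)).indicator hC) (fun s _ _ => hwint.integrableOn)
      ?_ ?_
    · rintro s ⟨u, hu, rfl⟩ -
      have hpre : MeasurableSet ((fun p : S₁ × S₂ × S₃ => p.1) ⁻¹' u) := measurable_fst hu
      rw [setIntegral_indicator hC, setIntegral_const, smul_eq_mul, mul_one]
      have hL : ∫ p in (fun p : S₁ × S₂ × S₃ => p.1) ⁻¹' u, (w p.1).toReal ∂ν
          = ∫ x in u, (w x).toReal ∂π₁ := by
        rw [← hfst,
          setIntegral_map hu (hw.ennreal_toReal.aestronglyMeasurable)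
            measurable_fst.aemeasurable]
      rw [hL, integral_toReal (hw.aemeasurable) (ae_of_all _ fun x =>
        lt_of_le_of_lt (hw1 x) ENNReal.one_lt_top), ← hint u hu]
      rfl
    · refine StronglyMeasurable.aestronglyMeasurable ?_
      have hfm : @Measurable (S₁ × S₂ × S₃) S₁
          (MeasurableSpace.comap (fun p : S₁ × S₂ × S₃ => p.1) inferInstance) _
          (fun p => p.1) :=
        Measurable.of_comap_le le_rfl
      exact ((hw.ennreal_toReal).comp hfm).stronglyMeasurable
  -- apply the key lemma
  rw [condIndepFun_iff_condExp_inter_preimage_eq_mul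
    (show Measurable fun p : S₁ × S₂ × S₃ => p.2.1 by fun_prop)
    (show Measurable fun p : S₁ × S₂ × S₃ => p.2.2 by fun_prop)]
  intro A B hA hB
  have hCA : MeasurableSet ((fun p : S₁ × S₂ × S₃ => p.2.1) ⁻¹' A) :=
    (measurable_fst.comp measurable_snd) hA
  have hCB : MeasurableSet ((fun p : S₁ × S₂ × S₃ => p.2.2) ⁻¹' B) :=
    (measurable_snd.comp measurable_snd) hB
  have ha : (fun p : S₁ × S₂ × S₃ => (ρ p.1 A).toReal)
      =ᵐ[ν] ν⟦(fun p : S₁ × S₂ × S₃ => p.2.1) ⁻¹' A | MeasurableSpace.comap (fun p : S₁ × S₂ × S₃ => p.1) inferInstance⟧ := by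
    refine key _ hCA _ (Kernel.measurable_coe ρ hA) (fun x => prob_le_one) ?_
    intro u hu
    have hset : (fun p : S₁ × S₂ × S₃ => p.1) ⁻¹' u ∩ (fun p : S₁ × S₂ × S₃ => p.2.1) ⁻¹' A
        = (fun p : S₁ × S₂ × S₃ => (p.1, p.2.1)) ⁻¹' (u ×ˢ A) := by
      ext p; simp [Set.mem_prod]
    rw [hset, ← Measure.map_apply hmap12 (hu.prod hA), h12, ← hdis,
      Measure.compProd_apply_prod hu hA]
  have hb : (fun p : S₁ × S₂ × S₃ => (κ p.1 B).toReal)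
      =ᵐ[ν] ν⟦(fun p : S₁ × S₂ × S₃ => p.2.2) ⁻¹' B | MeasurableSpace.comap (fun p : S₁ × S₂ × S₃ => p.1) inferInstance⟧ := by
    refine key _ hCB _ (Kernel.measurable_coe κ hB) (fun x => prob_le_one) ?_
    intro u hu
    have hset : (fun p : S₁ × S₂ × S₃ => p.1) ⁻¹' u ∩ (fun p : S₁ × S₂ × S₃ => p.2.2) ⁻¹' B
        = (fun p : S₁ × S₂ × S₃ => (p.1, p.2.2)) ⁻¹' (u ×ˢ B) := by
      ext p; simp [Set.mem_prod]
    rw [hset, ← Measure.map_apply hmap13 (hu.prod hB), h13,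
      Measure.compProd_apply_prod hu hB]
  have hc : (fun p : S₁ × S₂ × S₃ => ((ρ p.1 A) * (κ p.1 B)).toReal)
      =ᵐ[ν] ν⟦(fun p : S₁ × S₂ × S₃ => p.2.1) ⁻¹' A ∩
        (fun p : S₁ × S₂ × S₃ => p.2.2) ⁻¹' B | MeasurableSpace.comap (fun p : S₁ × S₂ × S₃ => p.1) inferInstance⟧ := by
    refine key _ (hCA.inter hCB) _
      ((Kernel.measurable_coe ρ hA).mul (Kernel.measurable_coe κ hB))
      (fun x => mul_le_one' prob_le_one prob_le_one) ?_
    intro u hu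
    have hset : (fun p : S₁ × S₂ × S₃ => p.1) ⁻¹' u ∩
        ((fun p : S₁ × S₂ × S₃ => p.2.1) ⁻¹' A ∩ (fun p : S₁ × S₂ × S₃ => p.2.2) ⁻¹' B)
        = u ×ˢ (A ×ˢ B) := by
      ext p; simp [Set.mem_prod, and_assoc]
    rw [hset, hνap _ ((hu.prod (hA.prod hB)))]
    have hpt : ∀ q : S₁ × S₂,
        κ q.1 ((fun z => (q.1, q.2, z)) ⁻¹' (u ×ˢ (A ×ˢ B)))
          = (u ×ˢ A).indicator (fun q : S₁ × S₂ => κ q.1 B) q := by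
      intro q
      by_cases hq : q ∈ u ×ˢ A
      · have : ((fun z : S₃ => (q.1, q.2, z)) ⁻¹' (u ×ˢ (A ×ˢ B))) = B := by
          ext z; simp [Set.mem_prod, hq.1, hq.2]
        rw [this, Set.indicator_of_mem hq]
      · have : ((fun z : S₃ => (q.1, q.2, z)) ⁻¹' (u ×ˢ (A ×ˢ B))) = ∅ := by
          ext z
          simp only [Set.mem_prod, Set.mem_preimage, Set.mem_empty_iff_false, iff_false]
          intro h
          exact hq ⟨h.1, h.2.1⟩
        rw [this, Set.indicator_of_notMem hq]; simp
    rw [lintegral_congr hpt, lintegral_indicator (hu.prod hA), ← hdis,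
      Measure.setLIntegral_compProd
        (show Measurable fun q : S₁ × S₂ => κ q.1 B from
          (Kernel.measurable_coe κ hB).comp measurable_fst) hu hA]
    refine setLIntegral_congr_fun hu (fun x _ => ?_)
    rw [show (∫⁻ b in A, (κ (x, b).1) B ∂ρ x) = ∫⁻ _ in A, κ x B ∂ρ x from rfl,
      setLIntegral_const, mul_comm]
    rfl
  refine hc.symm.trans ?_
  filter_upwards [ha, hb] with p h1 h2
  rw [← h1, ← h2, ENNReal.toReal_mul]
end
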